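/- arXiv:math/0601608 — 3 statements merged into one kernel-verified Lean document; each statement's English description precedes it below -/
import Mathlib

section
/- Let 0 < α < 1, let m ≥ 1 be an integer, let ν > 0 and let u > 0 satisfy ν u^{−α} < 1. Then the series ∑_{l=0}^∞ (Γ(m+lα)/Γ(1+lα)) (−ν u^{−α})^l converges absolutely and ∫₀^∞ s^{m−1} e^{−us} E_α(−ν s^α) ds = u^{−m} ∑_{l=0}^∞ (Γ(m+lα)/Γ(1+lα)) (−ν u^{−α})^l. -/
open MeasureTheory Real Set

/-- The Mittag-Leffler function `E_α(x) = ∑_{k=0}^∞ x^k / Γ(1+kα)`. -/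
noncomputable def mittagLeffler (α x : ℝ) : ℝ := ∑' k : ℕ, x ^ k / Real.Gamma (1 + k * α)

private lemma gamma_prod (n : ℕ) (x : ℝ) (hx : 0 ≤ x) :
    Real.Gamma ((n : ℝ) + 1 + x) = (∏ j ∈ Finset.range n, (x + 1 + j)) * Real.Gamma (1 + x) := by
  induction n with
  | zero => simp [add_comm]
  | succ n ih =>
    have hpos : (0:ℝ) < (n:ℝ) + 1 + x := by
      have := Nat.cast_nonneg (α := ℝ) n; linarith
    have hcast : ((n + 1 : ℕ) : ℝ) + 1 + x = ((n:ℝ) + 1 + x) + 1 := by push_cast; ring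
    rw [hcast, Real.Gamma_add_one hpos.ne', ih, Finset.prod_range_succ]
    ring

private lemma aux_int (α : ℝ) (h0 : 0 < α) (m : ℕ) (hm : 1 ≤ m) (u : ℝ) (hu : 0 < u)
    (c : ℝ) (l : ℕ) :
    (∫ s in Ioi (0:ℝ), s ^ (m - 1) * Real.exp (-u * s) *
        ((c * s ^ α) ^ l / Real.Gamma (1 + l * α)))
      = Real.Gamma ((m : ℝ) + l * α) / Real.Gamma (1 + l * α) * u ^ (-(m : ℝ))
          * (c * u ^ (-α)) ^ l ∧
    IntegrableOn (fun s : ℝ => s ^ (m - 1) * Real.exp (-u * s) *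
        ((c * s ^ α) ^ l / Real.Gamma (1 + l * α))) (Ioi 0) := by
  have hmR : (1:ℝ) ≤ (m:ℝ) := by exact_mod_cast hm
  have hlα : (0:ℝ) ≤ (l:ℝ) * α := mul_nonneg (Nat.cast_nonneg l) h0.le
  have ha : (0:ℝ) < (m:ℝ) + l * α := by linarith
  have hG : (0:ℝ) < Real.Gamma (1 + l * α) := Real.Gamma_pos_of_pos (by linarith)
  set G : ℝ := Real.Gamma (1 + l * α) with hGdef
  have hpt : EqOn (fun s : ℝ => (c ^ l / G) * (s ^ ((m:ℝ) + l * α - 1) * Real.exp (-(u * s))))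
      (fun s : ℝ => s ^ (m - 1) * Real.exp (-u * s) * ((c * s ^ α) ^ l / G)) (Ioi 0) := by
    intro s hs
    have hs0 : (0:ℝ) < s := hs
    have h1 : (c * s ^ α) ^ l = c ^ l * s ^ (α * l) := by
      rw [mul_pow, ← Real.rpow_natCast (s ^ α) l, ← Real.rpow_mul hs0.le]
    have h2 : s ^ (m - 1) = s ^ ((m:ℝ) - 1) := by
      rw [← Real.rpow_natCast s (m - 1), Nat.cast_sub hm, Nat.cast_one]
    have h3 : (m:ℝ) + l * α - 1 = ((m:ℝ) - 1) + α * l := by ring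
    simp only
    rw [h1, h2, h3, Real.rpow_add hs0, neg_mul]
    ring
  have hbase := integrableOn_rpow_mul_exp_neg_mul_rpow
    (p := 1) (s := (m:ℝ) + l * α - 1) (b := u) (by linarith) one_pos hu
  have hbase' : IntegrableOn
      (fun s : ℝ => s ^ ((m:ℝ) + l * α - 1) * Real.exp (-(u * s))) (Ioi 0) := by
    refine hbase.congr_fun (fun x hx => ?_) measurableSet_Ioi
    beta_reduce
    rw [Real.rpow_one, neg_mul]
  constructor
  · rw [← setIntegral_congr_fun measurableSet_Ioi hpt, integral_const_mul,
      integral_rpow_mul_exp_neg_mul_Ioi ha hu]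
    have hpow : (1 / u) ^ ((m:ℝ) + l * α) = u ^ (-(m:ℝ)) * (u ^ (-α)) ^ l := by
      rw [one_div, ← Real.rpow_neg_one u, ← Real.rpow_natCast (u ^ (-α)) l,
        ← Real.rpow_mul hu.le, ← Real.rpow_mul hu.le, ← Real.rpow_add hu]
      ring_nf
    rw [hpow, mul_pow]
    ring
  · exact IntegrableOn.congr_fun (hbase'.const_mul (c ^ l / G)) hpt measurableSet_Ioi

/-- Let 0 < α < 1, let m ≥ 1 be an integer, let ν > 0 and let u > 0 satisfy
ν u^{−α} < 1.  Then the series ∑_{l=0}^∞ (Γ(m+lα)/Γ(1+lα)) (−ν u^{−α})^l converges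
absolutely and
∫₀^∞ s^{m−1} e^{−us} E_α(−ν s^α) ds = u^{−m} ∑_{l=0}^∞ (Γ(m+lα)/Γ(1+lα)) (−ν u^{−α})^l. -/
theorem stmt4 (α : ℝ) (h0 : 0 < α) (h1 : α < 1) (m : ℕ) (hm : 1 ≤ m)
    (ν u : ℝ) (hν : 0 < ν) (hu : 0 < u) (hlt : ν * u ^ (-α) < 1) :
    Summable (fun l : ℕ =>
      |Real.Gamma ((m : ℝ) + l * α) / Real.Gamma (1 + l * α) * (-(ν * u ^ (-α))) ^ l|) ∧
    ∫ s in Ioi (0:ℝ), s ^ (m - 1) * Real.exp (-u * s) * mittagLeffler α (-ν * s ^ α)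
      = u ^ (-(m : ℝ)) *
          ∑' l : ℕ, Real.Gamma ((m : ℝ) + l * α) / Real.Gamma (1 + l * α)
            * (-(ν * u ^ (-α))) ^ l := by
  have hmR : (1:ℝ) ≤ (m:ℝ) := by exact_mod_cast hm
  have hupos : (0:ℝ) < u ^ (-α) := Real.rpow_pos_of_pos hu _
  have hr0 : (0:ℝ) < ν * u ^ (-α) := mul_pos hν hupos
  have hG : ∀ l : ℕ, (0:ℝ) < Real.Gamma (1 + l * α) := fun l =>
    Real.Gamma_pos_of_pos (by nlinarith [Nat.cast_nonneg (α := ℝ) l])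
  have hGm : ∀ l : ℕ, (0:ℝ) < Real.Gamma ((m:ℝ) + l * α) := fun l =>
    Real.Gamma_pos_of_pos (by nlinarith [Nat.cast_nonneg (α := ℝ) l])
  -- the ratio of Gammas is a polynomial-type product
  have hprod : ∀ l : ℕ, Real.Gamma ((m:ℝ) + l * α)
      = (∏ j ∈ Finset.range (m - 1), ((l:ℝ) * α + 1 + j)) * Real.Gamma (1 + l * α) := by
    intro l
    have hx : (0:ℝ) ≤ (l:ℝ) * α := by positivity
    have hcast : (m:ℝ) + l * α = ((m - 1 : ℕ) : ℝ) + 1 + (l:ℝ) * α := by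
      rw [Nat.cast_sub hm]; push_cast; ring
    rw [hcast, gamma_prod (m - 1) ((l:ℝ) * α) hx]
  have hratio_le : ∀ l : ℕ, Real.Gamma ((m:ℝ) + l * α) / Real.Gamma (1 + l * α)
      ≤ (m:ℝ) ^ (m - 1) * ((l:ℝ) + 1) ^ (m - 1) := by
    intro l
    rw [hprod l, mul_div_cancel_right₀ _ (hG l).ne']
    calc (∏ j ∈ Finset.range (m - 1), ((l:ℝ) * α + 1 + j))
        ≤ ∏ _j ∈ Finset.range (m - 1), ((m:ℝ) * ((l:ℝ) + 1)) := by
          refine Finset.prod_le_prod (fun j _ => by positivity) (fun j hj => ?_)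
          have hj' : j + 1 ≤ m := by
            have := Finset.mem_range.mp hj; omega
          have hjR : (j:ℝ) + 1 ≤ (m:ℝ) := by exact_mod_cast hj'
          have hlR : (0:ℝ) ≤ (l:ℝ) := Nat.cast_nonneg l
          nlinarith
      _ = ((m:ℝ) * ((l:ℝ) + 1)) ^ (m - 1) := by
          rw [Finset.prod_const, Finset.card_range]
      _ = (m:ℝ) ^ (m - 1) * ((l:ℝ) + 1) ^ (m - 1) := mul_pow _ _ _
  -- summability
  have hrn : ‖ν * u ^ (-α)‖ < 1 := by rw [Real.norm_eq_abs, abs_of_pos hr0]; exact hlt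
  have base := summable_pow_mul_geometric_of_norm_lt_one (m - 1) hrn
  have shifted : Summable (fun l : ℕ => ((l:ℝ) + 1) ^ (m - 1) * (ν * u ^ (-α)) ^ (l + 1)) := by
    have h := base.comp_injective (add_left_injective 1)
    refine h.congr fun l => ?_
    simp only [Function.comp_apply]
    push_cast; ring
  have S1 : Summable (fun l : ℕ => ((l:ℝ) + 1) ^ (m - 1) * (ν * u ^ (-α)) ^ l) := by
    refine (shifted.mul_left (ν * u ^ (-α))⁻¹).congr fun l => ?_
    rw [pow_succ]
    field_simp
  have A : Summable (fun l : ℕ =>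
      Real.Gamma ((m:ℝ) + l * α) / Real.Gamma (1 + l * α) * (ν * u ^ (-α)) ^ l) := by
    refine Summable.of_nonneg_of_le
      (fun l => mul_nonneg (div_nonneg (hGm l).le (hG l).le) (pow_nonneg hr0.le l))
      (fun l => ?_) (S1.mul_left ((m:ℝ) ^ (m - 1)))
    rw [← mul_assoc]
    exact mul_le_mul_of_nonneg_right (hratio_le l) (pow_nonneg hr0.le l)
  have habs : (fun l : ℕ =>
      |Real.Gamma ((m:ℝ) + l * α) / Real.Gamma (1 + l * α) * (-(ν * u ^ (-α))) ^ l|)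
      = fun l : ℕ => Real.Gamma ((m:ℝ) + l * α) / Real.Gamma (1 + l * α)
          * (ν * u ^ (-α)) ^ l := by
    funext l
    rw [abs_mul, abs_pow, abs_neg, abs_of_pos hr0,
      abs_of_nonneg (div_nonneg (hGm l).le (hG l).le)]
  refine ⟨habs ▸ A, ?_⟩
  -- the integral
  have key := fun (c : ℝ) (l : ℕ) => aux_int α h0 m hm u hu c l
  set F : ℕ → ℝ → ℝ := fun l s => s ^ (m - 1) * Real.exp (-u * s) *
      ((-ν * s ^ α) ^ l / Real.Gamma (1 + l * α)) with hF
  have hFint : ∀ l : ℕ, IntegrableOn (F l) (Ioi 0) := fun l => (key (-ν) l).2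
  have hnormval : ∀ l : ℕ, (∫ s in Ioi (0:ℝ), ‖F l s‖)
      = Real.Gamma ((m:ℝ) + l * α) / Real.Gamma (1 + l * α) * u ^ (-(m:ℝ))
          * (ν * u ^ (-α)) ^ l := by
    intro l
    have h1 : EqOn (fun s : ℝ => ‖F l s‖)
        (fun s : ℝ => s ^ (m - 1) * Real.exp (-u * s) *
          ((ν * s ^ α) ^ l / Real.Gamma (1 + l * α))) (Ioi 0) := by
      intro s hs
      have hs0 : (0:ℝ) < s := hs
      have hsa : (0:ℝ) ≤ s ^ α := (Real.rpow_pos_of_pos hs0 α).le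
      simp only [hF, Real.norm_eq_abs]
      rw [abs_mul, abs_mul, abs_div, abs_pow, abs_pow, abs_mul, abs_neg,
        abs_of_pos hs0, abs_of_pos (Real.exp_pos _), abs_of_pos (hG l),
        abs_of_pos hν, abs_of_nonneg hsa]
    rw [setIntegral_congr_fun measurableSet_Ioi h1, (key ν l).1]
  have hsum_norm : Summable (fun l : ℕ => ∫ s in Ioi (0:ℝ), ‖F l s‖) := by
    refine Summable.congr ?_ (fun l => (hnormval l).symm)
    refine (A.mul_left (u ^ (-(m:ℝ)))).congr fun l => by ring
  have interchange := MeasureTheory.integral_tsum_of_summable_integral_norm hFint hsum_norm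
  have hLHS : ∀ s : ℝ, s ^ (m - 1) * Real.exp (-u * s) * mittagLeffler α (-ν * s ^ α)
      = ∑' l : ℕ, F l s := by
    intro s
    rw [mittagLeffler, ← tsum_mul_left]
  calc ∫ s in Ioi (0:ℝ), s ^ (m - 1) * Real.exp (-u * s) * mittagLeffler α (-ν * s ^ α)
      = ∫ s in Ioi (0:ℝ), ∑' l : ℕ, F l s := by
        exact integral_congr_ae (Filter.Eventually.of_forall fun s => hLHS s)
    _ = ∑' l : ℕ, ∫ s in Ioi (0:ℝ), F l s := interchange.symm
    _ = ∑' l : ℕ, u ^ (-(m:ℝ)) * (Real.Gamma ((m:ℝ) + l * α) / Real.Gamma (1 + l * α)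
          * (-(ν * u ^ (-α))) ^ l) := by
        refine tsum_congr fun l => ?_
        rw [(key (-ν) l).1, neg_mul]
        ring
    _ = u ^ (-(m:ℝ)) * ∑' l : ℕ, Real.Gamma ((m:ℝ) + l * α) / Real.Gamma (1 + l * α)
          * (-(ν * u ^ (-α))) ^ l := tsum_mul_left
end

section
/- For every q ≥ 0, E_{1/2}(−q) = ∫₀^∞ e^{−q t^{−1/2}} f_{1/2}(t) dt, where E_{1/2}(x) = ∑_{k=0}^∞ x^k / Γ(1+k/2) and f_{1/2}(t) = (2√π)^{−1} t^{−3/2} e^{−1/(4t)} for t > 0. -/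
open MeasureTheory Real Set

/-- The density `f_{1/2}(t) = (2√π)^{−1} t^{−3/2} e^{−1/(4t)}` of the positive stable
law of index 1/2. -/
noncomputable def stableHalf (t : ℝ) : ℝ :=
  (2 * Real.sqrt π)⁻¹ * t ^ (-(3 / 2) : ℝ) * Real.exp (-1 / (4 * t))

set_option maxHeartbeats 1000000

namespace Stmt7Aux

/-- The Gamma-type integrand obtained from the moment integrand by the substitution
`u = t⁻¹`. -/
noncomputable def g (k : ℕ) : ℝ → ℝ :=
  fun u => (2 * Real.sqrt π)⁻¹ * (u ^ (((k : ℝ) + 1) / 2 - 1) * Real.exp (-(1 / 4 * u)))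

lemma integrand_eq (k : ℕ) {x : ℝ} (hx : x ∈ Ioi (0 : ℝ)) :
    (|(-1 : ℝ)| * x ^ ((-1 : ℝ) - 1)) • g k (x ^ (-1 : ℝ))
      = x ^ (-(k : ℝ) / 2) * stableHalf x := by
  have hx' : (0 : ℝ) < x := hx
  have h1 : (x ^ (-1 : ℝ)) ^ (((k : ℝ) + 1) / 2 - 1)
      = x ^ ((-1 : ℝ) * (((k : ℝ) + 1) / 2 - 1)) := by
    rw [← Real.rpow_mul hx'.le]
  have h2 : x ^ (-1 : ℝ) = x⁻¹ := by
    rw [Real.rpow_neg_one]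
  rw [g, h1, h2, stableHalf]
  rw [abs_neg, abs_one, one_mul, smul_eq_mul]
  have e1 : -(1 / 4 * x⁻¹) = -1 / (4 * x) := by
    field_simp
  rw [e1]
  have e2 : x ^ ((-1 : ℝ) - 1) * ((2 * Real.sqrt π)⁻¹ *
      (x ^ ((-1 : ℝ) * (((k : ℝ) + 1) / 2 - 1)) * Real.exp (-1 / (4 * x))))
      = (2 * Real.sqrt π)⁻¹ * ((x ^ ((-1 : ℝ) - 1) * x ^ ((-1 : ℝ) * (((k : ℝ) + 1) / 2 - 1)))
          * Real.exp (-1 / (4 * x))) := by ring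
  rw [e2, ← Real.rpow_add hx']
  have e3 : x ^ (-(k : ℝ) / 2) * ((2 * Real.sqrt π)⁻¹ * x ^ (-(3 / 2) : ℝ) *
      Real.exp (-1 / (4 * x)))
      = (2 * Real.sqrt π)⁻¹ * ((x ^ (-(k : ℝ) / 2) * x ^ (-(3 / 2) : ℝ))
          * Real.exp (-1 / (4 * x))) := by ring
  rw [e3, ← Real.rpow_add hx']
  have e4 : (-1 : ℝ) - 1 + (-1 : ℝ) * (((k : ℝ) + 1) / 2 - 1)
      = -(k : ℝ) / 2 + (-(3 / 2) : ℝ) := by ring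
  rw [e4]

lemma g_integrable (k : ℕ) : IntegrableOn (g k) (Ioi (0 : ℝ)) := by
  have h : IntegrableOn (fun u : ℝ => u ^ (((k : ℝ) + 1) / 2 - 1)
      * Real.exp (-(1 / 4) * u ^ (1 : ℝ))) (Ioi 0) :=
    integrableOn_rpow_mul_exp_neg_mul_rpow (by
      have : (0 : ℝ) ≤ (k : ℝ) := Nat.cast_nonneg k
      linarith) (by norm_num) (by norm_num)
  have h' : IntegrableOn (fun u : ℝ => u ^ (((k : ℝ) + 1) / 2 - 1)
      * Real.exp (-(1 / 4 * u))) (Ioi 0) := by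
    refine h.congr_fun (fun u hu => ?_) measurableSet_Ioi
    simp only [Real.rpow_one]
    ring_nf
  exact h'.const_mul ((2 * Real.sqrt π)⁻¹)

lemma moment_integrable (k : ℕ) :
    IntegrableOn (fun t : ℝ => t ^ (-(k : ℝ) / 2) * stableHalf t) (Ioi 0) := by
  have := (integrableOn_Ioi_comp_rpow_iff (g k) (p := (-1 : ℝ)) (by norm_num)).mpr
    (g_integrable k)
  exact this.congr_fun (fun x hx => integrand_eq k hx) measurableSet_Ioi

lemma moment (k : ℕ) :
    ∫ t in Ioi (0 : ℝ), t ^ (-(k : ℝ) / 2) * stableHalf t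
      = 2 ^ k * Real.Gamma (((k : ℝ) + 1) / 2) / Real.sqrt π := by
  have hsub := integral_comp_rpow_Ioi (g k) (p := (-1 : ℝ)) (by norm_num)
  have hleft : ∫ x in Ioi (0 : ℝ), (|(-1 : ℝ)| * x ^ ((-1 : ℝ) - 1)) • g k (x ^ (-1 : ℝ))
      = ∫ t in Ioi (0 : ℝ), t ^ (-(k : ℝ) / 2) * stableHalf t :=
    setIntegral_congr_fun measurableSet_Ioi (fun x hx => integrand_eq k hx)
  rw [hleft] at hsub
  rw [hsub]
  have ha : (0 : ℝ) < ((k : ℝ) + 1) / 2 := by positivity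
  have hval : ∫ u in Ioi (0 : ℝ), u ^ (((k : ℝ) + 1) / 2 - 1) * Real.exp (-((1 / 4 : ℝ) * u))
      = (1 / (1 / 4 : ℝ)) ^ (((k : ℝ) + 1) / 2) * Real.Gamma (((k : ℝ) + 1) / 2) :=
    integral_rpow_mul_exp_neg_mul_Ioi ha (by norm_num)
  have hg : ∫ u in Ioi (0 : ℝ), g k u
      = (2 * Real.sqrt π)⁻¹ * ((1 / (1 / 4 : ℝ)) ^ (((k : ℝ) + 1) / 2)
          * Real.Gamma (((k : ℝ) + 1) / 2)) := by
    show (∫ u in Ioi (0:ℝ), (2 * Real.sqrt π)⁻¹ *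
        (u ^ (((k : ℝ) + 1) / 2 - 1) * Real.exp (-(1 / 4 * u)))) = _
    rw [integral_const_mul, hval]
  rw [hg]
  have h4 : ((1 / (1 / 4 : ℝ)) : ℝ) ^ (((k : ℝ) + 1) / 2) = 2 ^ (k + 1) := by
    rw [← Real.rpow_natCast (2 : ℝ) (k + 1)]
    have : ((1 / (1 / 4 : ℝ)) : ℝ) = (2 : ℝ) ^ (2 : ℝ) := by
      rw [Real.rpow_two]; norm_num
    rw [this, ← Real.rpow_mul (by norm_num : (0:ℝ) ≤ 2)]
    congr 1
    push_cast
    ring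
  rw [h4]
  have hπ : Real.sqrt π ≠ 0 := ne_of_gt (Real.sqrt_pos.mpr Real.pi_pos)
  field_simp
  ring

/-- Legendre duplication specialised: `Γ((k+1)/2) * Γ(1 + k/2) = √π * k! / 2^k`. -/
lemma dup (k : ℕ) :
    Real.Gamma (((k : ℝ) + 1) / 2) * Real.Gamma (1 + (k : ℝ) / 2)
      = Real.sqrt π * (k.factorial : ℝ) / 2 ^ k := by
  have h := Real.Gamma_mul_Gamma_add_half (((k : ℝ) + 1) / 2)
  have e1 : ((k : ℝ) + 1) / 2 + 1 / 2 = 1 + (k : ℝ) / 2 := by ring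
  have e2 : 2 * (((k : ℝ) + 1) / 2) = (k : ℝ) + 1 := by ring
  rw [e1, e2] at h
  rw [h, Real.Gamma_nat_eq_factorial k]
  have h2 : (2 : ℝ) ^ (1 - ((k : ℝ) + 1)) = (2 ^ k : ℝ)⁻¹ := by
    have : (1 : ℝ) - ((k : ℝ) + 1) = -(k : ℝ) := by ring
    rw [this, Real.rpow_neg (by norm_num : (0:ℝ) ≤ 2), Real.rpow_natCast]
  rw [h2]
  ring

lemma gamma_ml_pos (k : ℕ) : 0 < Real.Gamma (1 + (k : ℝ) / 2) :=
  Real.Gamma_pos_of_pos (by positivity)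

/-- The coefficient identity: `2^k Γ((k+1)/2) / (√π k!) = 1 / Γ(1+k/2)`. -/
lemma coeff_eq (k : ℕ) :
    2 ^ k * Real.Gamma (((k : ℝ) + 1) / 2) / Real.sqrt π / (k.factorial : ℝ)
      = 1 / Real.Gamma (1 + (k : ℝ) / 2) := by
  have hπ : (0:ℝ) < Real.sqrt π := Real.sqrt_pos.mpr Real.pi_pos
  have hf : (0:ℝ) < (k.factorial : ℝ) := by exact_mod_cast k.factorial_pos
  have hg := gamma_ml_pos k
  have hd : Real.Gamma (((k : ℝ) + 1) / 2) * Real.Gamma ((2 + (k : ℝ)) / 2)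
      = Real.sqrt π * (k.factorial : ℝ) / 2 ^ k := by
    rw [show (2 + (k : ℝ)) / 2 = 1 + (k : ℝ) / 2 by ring]
    exact dup k
  have h2k : (0:ℝ) < 2 ^ k := by positivity
  rw [eq_div_iff (ne_of_gt h2k)] at hd
  field_simp
  linear_combination hd

/-- Summability of the Mittag-Leffler series at `α = 1/2`. -/
lemma summable_ml {q : ℝ} (hq : 0 ≤ q) :
    Summable (fun k : ℕ => q ^ k / Real.Gamma (1 + (k : ℝ) / 2)) := by
  have hπ : (0:ℝ) < Real.sqrt π := Real.sqrt_pos.mpr Real.pi_pos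
  have heven : Summable (fun m : ℕ => q ^ (2 * m) / Real.Gamma (1 + ((2 * m : ℕ) : ℝ) / 2)) := by
    refine (Real.summable_pow_div_factorial (q ^ 2)).congr (fun m => ?_)
    have e : (1 : ℝ) + ((2 * m : ℕ) : ℝ) / 2 = (m : ℝ) + 1 := by push_cast; ring
    rw [e, Real.Gamma_nat_eq_factorial, pow_mul]
  have hodd : Summable
      (fun m : ℕ => q ^ (2 * m + 1) / Real.Gamma (1 + ((2 * m + 1 : ℕ) : ℝ) / 2)) := by
    refine Summable.of_nonneg_of_le
      (fun m => div_nonneg (pow_nonneg hq _) (gamma_ml_pos (2 * m + 1)).le) (fun m => ?_)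
      (((Real.summable_pow_div_factorial (4 * q ^ 2)).mul_left (2 * q / Real.sqrt π)))
    have key : (1 : ℝ) / Real.Gamma (1 + ((2 * m + 1 : ℕ) : ℝ) / 2)
        = 2 ^ (2 * m + 1) * (m.factorial : ℝ)
            / (Real.sqrt π * ((2 * m + 1).factorial : ℝ)) := by
      have hc := coeff_eq (2 * m + 1)
      have e : (((2 * m + 1 : ℕ) : ℝ) + 1) / 2 = (m : ℝ) + 1 := by push_cast; ring
      rw [e, Real.Gamma_nat_eq_factorial] at hc
      rw [← hc]
      field_simp
    have hfle : ((m.factorial : ℝ)) * (m.factorial : ℝ) ≤ ((2 * m + 1).factorial : ℝ) := by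
      have hd : m.factorial * (m + 1).factorial ∣ (2 * m + 1).factorial := by
        have := Nat.factorial_mul_factorial_dvd_factorial_add m (m + 1)
        simpa [two_mul, Nat.add_assoc, Nat.add_comm, Nat.add_left_comm] using this
      have hle : m.factorial * m.factorial ≤ (2 * m + 1).factorial := by
        calc m.factorial * m.factorial ≤ m.factorial * (m + 1).factorial :=
              Nat.mul_le_mul_left _ (Nat.factorial_le (Nat.le_succ m))
          _ ≤ (2 * m + 1).factorial := Nat.le_of_dvd (Nat.factorial_pos _) hd
      exact_mod_cast hle
    have hfpos : (0:ℝ) < (m.factorial : ℝ) := by exact_mod_cast m.factorial_pos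
    have h2pos : (0:ℝ) < ((2 * m + 1).factorial : ℝ) := by exact_mod_cast (2*m+1).factorial_pos
    have step1 : q ^ (2 * m + 1) / Real.Gamma (1 + ((2 * m + 1 : ℕ) : ℝ) / 2)
        = q ^ (2 * m + 1) * (2 ^ (2 * m + 1) * (m.factorial : ℝ)
            / (Real.sqrt π * ((2 * m + 1).factorial : ℝ))) := by
      rw [div_eq_mul_one_div, key]
    rw [step1]
    have step2 : q ^ (2 * m + 1) * (2 ^ (2 * m + 1) * (m.factorial : ℝ)
            / (Real.sqrt π * ((2 * m + 1).factorial : ℝ)))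
        ≤ q ^ (2 * m + 1) * (2 ^ (2 * m + 1) * (m.factorial : ℝ)
            / (Real.sqrt π * ((m.factorial : ℝ) * (m.factorial : ℝ)))) := by
      gcongr
      all_goals first | exact hfle | positivity
    refine step2.trans (le_of_eq ?_)
    have hq2 : q ^ (2 * m + 1) * (2:ℝ) ^ (2 * m + 1) = 2 * q * (4 * q ^ 2) ^ m := by
      rw [pow_succ q, pow_succ (2:ℝ), pow_mul q, pow_mul (2:ℝ), mul_pow]
      norm_num
      try ring
    rw [show q ^ (2 * m + 1) * (2 ^ (2 * m + 1) * (m.factorial : ℝ)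
            / (Real.sqrt π * ((m.factorial : ℝ) * (m.factorial : ℝ))))
        = (q ^ (2 * m + 1) * (2:ℝ) ^ (2 * m + 1)) * ((m.factorial : ℝ)
            / (Real.sqrt π * ((m.factorial : ℝ) * (m.factorial : ℝ)))) from by ring, hq2]
    field_simp
    try ring
  exact (heven.hasSum.even_add_odd hodd.hasSum).summable

end Stmt7Aux

open Stmt7Aux in
/-- For every q ≥ 0, E_{1/2}(−q) = ∫₀^∞ e^{−q t^{−1/2}} f_{1/2}(t) dt. -/
theorem stmt7 (q : ℝ) (hq : 0 ≤ q) :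
    mittagLeffler (1 / 2) (-q)
      = ∫ t in Ioi (0:ℝ), Real.exp (-q * t ^ (-(1 / 2) : ℝ)) * stableHalf t := by
  classical
  set F : ℕ → ℝ → ℝ :=
    fun k t => (-q * t ^ (-(1 / 2) : ℝ)) ^ k / (k.factorial : ℝ) * stableHalf t with hF
  have hπ : (0:ℝ) < Real.sqrt π := Real.sqrt_pos.mpr Real.pi_pos
  have hFeq : ∀ (k : ℕ) {t : ℝ}, t ∈ Ioi (0:ℝ) →
      F k t = ((-q) ^ k / (k.factorial : ℝ)) * (t ^ (-(k : ℝ) / 2) * stableHalf t) := by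
    intro k t ht
    have ht' : (0:ℝ) < t := ht
    have h1 : (t ^ (-(1 / 2) : ℝ)) ^ k = t ^ (-(k : ℝ) / 2) := by
      rw [← Real.rpow_natCast (t ^ (-(1 / 2) : ℝ)) k, ← Real.rpow_mul ht'.le]
      congr 1
      ring
    rw [hF]
    simp only
    rw [mul_pow, h1]
    ring
  have hFint : ∀ k : ℕ, IntegrableOn (F k) (Ioi (0:ℝ)) := by
    intro k
    refine (Integrable.const_mul (moment_integrable k) ((-q) ^ k / (k.factorial : ℝ))).congr ?_
    filter_upwards [ae_restrict_mem measurableSet_Ioi] with t ht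
    exact (hFeq k ht).symm
  have hFval : ∀ k : ℕ, ∫ t in Ioi (0:ℝ), F k t
      = (-q) ^ k / Real.Gamma (1 + (k : ℝ) / 2) := by
    intro k
    have h : ∫ t in Ioi (0:ℝ), F k t
        = ∫ t in Ioi (0:ℝ), ((-q) ^ k / (k.factorial : ℝ)) * (t ^ (-(k : ℝ) / 2) * stableHalf t) :=
      setIntegral_congr_fun measurableSet_Ioi (fun t ht => hFeq k ht)
    rw [h, integral_const_mul, moment k]
    calc (-q) ^ k / (k.factorial : ℝ)
          * (2 ^ k * Real.Gamma (((k : ℝ) + 1) / 2) / Real.sqrt π)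
        = (2 ^ k * Real.Gamma (((k : ℝ) + 1) / 2) / Real.sqrt π / (k.factorial : ℝ))
            * (-q) ^ k := by ring
      _ = (1 / Real.Gamma (1 + (k : ℝ) / 2)) * (-q) ^ k := by rw [coeff_eq k]
      _ = (-q) ^ k / Real.Gamma (1 + (k : ℝ) / 2) := by ring
  have hFnorm : ∀ k : ℕ, ∫ t in Ioi (0:ℝ), ‖F k t‖
      = q ^ k / Real.Gamma (1 + (k : ℝ) / 2) := by
    intro k
    have hnormeq : ∀ t ∈ Ioi (0:ℝ), ‖F k t‖
        = (q ^ k / (k.factorial : ℝ)) * (t ^ (-(k : ℝ) / 2) * stableHalf t) := by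
      intro t ht
      have ht' : (0:ℝ) < t := ht
      have hrp : (0:ℝ) ≤ t ^ (-(k : ℝ) / 2) := Real.rpow_nonneg ht'.le _
      have hst : (0:ℝ) ≤ stableHalf t := by
        rw [stableHalf]
        have h32 : (0:ℝ) ≤ t ^ (-(3 / 2) : ℝ) := Real.rpow_nonneg ht'.le _
        positivity
      rw [hFeq k ht, norm_mul, norm_mul, norm_div, norm_pow, norm_neg]
      rw [Real.norm_of_nonneg hq, Real.norm_of_nonneg (by positivity : (0:ℝ) ≤ (k.factorial : ℝ))]
      rw [Real.norm_of_nonneg hrp, Real.norm_of_nonneg hst]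
    have h : ∫ t in Ioi (0:ℝ), ‖F k t‖
        = ∫ t in Ioi (0:ℝ), (q ^ k / (k.factorial : ℝ)) * (t ^ (-(k : ℝ) / 2) * stableHalf t) :=
      setIntegral_congr_fun measurableSet_Ioi hnormeq
    rw [h, integral_const_mul, moment k]
    calc q ^ k / (k.factorial : ℝ)
          * (2 ^ k * Real.Gamma (((k : ℝ) + 1) / 2) / Real.sqrt π)
        = (2 ^ k * Real.Gamma (((k : ℝ) + 1) / 2) / Real.sqrt π / (k.factorial : ℝ))
            * q ^ k := by ring
      _ = (1 / Real.Gamma (1 + (k : ℝ) / 2)) * q ^ k := by rw [coeff_eq k]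
      _ = q ^ k / Real.Gamma (1 + (k : ℝ) / 2) := by ring
  have hFsum : Summable (fun k : ℕ => ∫ t in Ioi (0:ℝ), ‖F k t‖) := by
    simp_rw [hFnorm]
    exact summable_ml hq
  have hptwise : ∀ t ∈ Ioi (0:ℝ),
      (∑' k : ℕ, F k t) = Real.exp (-q * t ^ (-(1 / 2) : ℝ)) * stableHalf t := by
    intro t ht
    have hexp : Real.exp (-q * t ^ (-(1 / 2) : ℝ))
        = ∑' k : ℕ, (-q * t ^ (-(1 / 2) : ℝ)) ^ k / (k.factorial : ℝ) := by
      rw [Real.exp_eq_exp_ℝ, NormedSpace.exp_eq_tsum_div]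
    rw [hexp, ← tsum_mul_right]
  have hswap := integral_tsum_of_summable_integral_norm hFint hFsum
  have hcongr : ∫ t in Ioi (0:ℝ), (∑' k : ℕ, F k t)
      = ∫ t in Ioi (0:ℝ), Real.exp (-q * t ^ (-(1 / 2) : ℝ)) * stableHalf t :=
    setIntegral_congr_fun measurableSet_Ioi hptwise
  rw [hcongr] at hswap
  rw [← hswap]
  rw [mittagLeffler]
  congr 1
  funext k
  rw [hFval k]
  congr 2
  push_cast
  ring
end

section
/- Let m ≥ 1 be an integer, ν > 0 and u > 0. Then ∫₀^∞ s^{m−1} e^{−us} E_{1/2}(−ν s^{1/2}) ds = u^{−m} ∫₀^∞ ∫₀^∞ s^{m−1} e^{−s − ν (s/u)^{1/2} t^{−1/2}} f_{1/2}(t) dt ds, where E_{1/2}(x) = ∑_{k=0}^∞ x^k / Γ(1+k/2) and f_{1/2}(t) = (2√π)^{−1} t^{−3/2} e^{−1/(4t)} for t > 0, both sides being finite. -/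
set_option maxHeartbeats 1000000


open MeasureTheory Real Set

lemma gamma_dup (k : ℕ) : Real.Gamma (((k:ℝ)+1)/2) * Real.Gamma (1 + (k:ℝ)/2)
    = Real.sqrt π * k.factorial / 2^k := by
  have h := Real.Gamma_mul_Gamma_add_half (((k:ℝ)+1)/2)
  rw [show ((k:ℝ)+1)/2 + 1/2 = 1 + (k:ℝ)/2 by ring,
      show 2*(((k:ℝ)+1)/2) = (k:ℝ)+1 by ring,
      Real.Gamma_nat_eq_factorial,
      show (1:ℝ) - ((k:ℝ)+1) = -(k:ℝ) by ring,
      Real.rpow_neg (by norm_num), Real.rpow_natCast] at h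
  rw [h]; ring

lemma gamma_half_pos (k : ℕ) : 0 < Real.Gamma (1 + (k:ℝ)/2) :=
  Real.Gamma_pos_of_pos (by positivity)

lemma coef_eq (k : ℕ) : 2^k * Real.Gamma (((k:ℝ)+1)/2)
    = Real.sqrt π * k.factorial / Real.Gamma (1 + (k:ℝ)/2) := by
  rw [eq_div_iff (gamma_half_pos k).ne']
  have h := gamma_dup k
  have h2 : (0:ℝ) < 2^k := by positivity
  field_simp at h ⊢
  linarith [h]

lemma summable_ml {x : ℝ} (hx : 0 ≤ x) :
    Summable (fun k : ℕ => x ^ k / Real.Gamma (1 + (k:ℝ)/2)) := by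
  have he : Summable (fun j : ℕ => x ^ (2*j) / Real.Gamma (1 + ((2*j:ℕ):ℝ)/2)) := by
    have : ∀ j : ℕ, x ^ (2*j) / Real.Gamma (1 + ((2*j:ℕ):ℝ)/2)
        = (x^2)^j / j.factorial := by
      intro j
      rw [pow_mul, show (1:ℝ) + ((2*j:ℕ):ℝ)/2 = (j:ℝ)+1 by push_cast; ring,
        Real.Gamma_nat_eq_factorial]
    simpa only [this] using Real.summable_pow_div_factorial (x^2)
  have ho : Summable (fun j : ℕ => x ^ (2*j+1) / Real.Gamma (1 + ((2*j+1:ℕ):ℝ)/2)) := by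
    have hΓ : ∀ j : ℕ, Real.Gamma (1 + ((2*j+1:ℕ):ℝ)/2)
        = Real.sqrt π * (2*j+1).factorial / (2^(2*j+1) * j.factorial) := by
      intro j
      have hd := gamma_dup (2*j+1)
      rw [show (((2*j+1:ℕ):ℝ)+1)/2 = (j:ℝ)+1 by push_cast; ring,
        Real.Gamma_nat_eq_factorial] at hd
      have hj : (0:ℝ) < j.factorial := by exact_mod_cast j.factorial_pos
      rw [eq_div_iff (by positivity)]
      have h2 : (0:ℝ) < 2^(2*j+1) := by positivity
      field_simp at hd ⊢
      nlinarith [hd]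
    apply Summable.of_nonneg_of_le
      (f := fun j : ℕ => (2*x/Real.sqrt π) * ((4*x^2)^j / j.factorial))
    · intro j; positivity
    · intro j
      rw [hΓ j, div_div_eq_mul_div]
      have hfac : ((j.factorial : ℝ)) * j.factorial ≤ (2*j+1).factorial := by
        have h1 : j.factorial * j.factorial ∣ (j+j).factorial :=
          Nat.factorial_mul_factorial_dvd_factorial_add j j
        have h2 : j.factorial * j.factorial ≤ (j+j).factorial :=
          Nat.le_of_dvd (j+j).factorial_pos h1
        have h3 : (j+j).factorial ≤ (2*j+1).factorial :=
          Nat.factorial_le (by omega)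
        exact_mod_cast le_trans h2 h3
      have hπ : (0:ℝ) < Real.sqrt π := Real.sqrt_pos.mpr Real.pi_pos
      have hj : (0:ℝ) < j.factorial := by exact_mod_cast j.factorial_pos
      calc x ^ (2*j+1) * (2^(2*j+1) * j.factorial) / (Real.sqrt π * (2*j+1).factorial)
          ≤ x ^ (2*j+1) * (2^(2*j+1) * j.factorial)
              / (Real.sqrt π * (j.factorial * j.factorial)) := by
            gcongr
        _ = 2*x/Real.sqrt π * ((4*x^2)^j / j.factorial) := by
            have h4 : (4:ℝ)^j = 2^(2*j) := by
              rw [show (4:ℝ) = 2^2 by norm_num, ← pow_mul]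
            field_simp
            rw [mul_pow, h4]
            ring
    · exact (Real.summable_pow_div_factorial (4*x^2)).mul_left _
  exact ((he.hasSum.even_add_odd ho.hasSum).summable)

lemma rpow_eq_pow_aux (r : ℝ) (k : ℕ) (hr : r ∈ Ioi (0:ℝ)) :
    r ^ ((k:ℕ):ℝ) * Real.exp (-(1/4) * r ^ (2:ℝ)) = r ^ k * Real.exp (-(r^2/4)) := by
  have h1 : r ^ ((k:ℕ):ℝ) = r ^ k := Real.rpow_natCast r k
  have h2 : r ^ (2:ℝ) = r ^ 2 := by
    rw [show (2:ℝ) = ((2:ℕ):ℝ) by norm_num, Real.rpow_natCast]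
  rw [h1, h2]
  ring_nf

lemma int_pow_gauss (k : ℕ) :
    IntegrableOn (fun r : ℝ => r ^ k * Real.exp (-(r^2/4))) (Ioi 0) := by
  have h := integrableOn_rpow_mul_exp_neg_mul_rpow (p := 2) (s := (k:ℝ)) (b := 1/4)
    (lt_of_lt_of_le neg_one_lt_zero (Nat.cast_nonneg k)) two_pos (by norm_num)
  exact h.congr_fun (fun r hr => rpow_eq_pow_aux r k hr) measurableSet_Ioi

lemma gauss_moment (k : ℕ) :
    ∫ r in Ioi (0:ℝ), r ^ k * Real.exp (-(r^2/4))
      = 2^k * Real.Gamma (((k:ℝ)+1)/2) := by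
  have h := integral_rpow_mul_exp_neg_mul_rpow (p := 2) (q := (k:ℝ)) (b := 1/4)
    (by norm_num) (lt_of_lt_of_le neg_one_lt_zero (Nat.cast_nonneg k)) (by norm_num)
  have h2 : ∫ r in Ioi (0:ℝ), r ^ k * Real.exp (-(r^2/4))
      = ∫ x in Ioi (0:ℝ), x ^ ((k:ℕ):ℝ) * Real.exp (-(1/4) * x ^ (2:ℝ)) :=
    (setIntegral_congr_fun measurableSet_Ioi (fun r hr => rpow_eq_pow_aux r k hr)).symm
  rw [h2, h]
  have h14 : ((1:ℝ)/4) = (2:ℝ) ^ (-2:ℝ) := by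
    rw [show (-2:ℝ) = -((2:ℕ):ℝ) by norm_num, Real.rpow_neg (by norm_num),
      Real.rpow_natCast]
    norm_num
  rw [h14, ← Real.rpow_mul (by norm_num : (0:ℝ) ≤ 2),
    show (-2:ℝ) * (-((k:ℝ)+1)/2) = (k:ℝ)+1 by ring,
    Real.rpow_add (by norm_num : (0:ℝ) < 2), Real.rpow_one, Real.rpow_natCast]
  ring

lemma ml_half_eq (x : ℝ) :
    mittagLeffler (1/2) x = ∑' k : ℕ, x ^ k / Real.Gamma (1 + (k:ℝ)/2) := by
  unfold mittagLeffler
  exact tsum_congr (fun k => by rw [mul_one_div])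

lemma exp_tsum (z : ℝ) : Real.exp z = ∑' n : ℕ, z ^ n / n.factorial := by
  rw [Real.exp_eq_exp_ℝ, NormedSpace.exp_eq_tsum_div]

lemma ml_rep {x : ℝ} (hx : 0 ≤ x) :
    mittagLeffler (1/2) (-x)
      = (Real.sqrt π)⁻¹ * ∫ r in Ioi (0:ℝ), Real.exp (-(x*r) - r^2/4) := by
  have hπ : (0:ℝ) < Real.sqrt π := Real.sqrt_pos.mpr Real.pi_pos
  set F : ℕ → ℝ → ℝ :=
    fun k r => ((-x)^k / k.factorial) * (r^k * Real.exp (-(r^2/4))) with hF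
  have hFint : ∀ k, Integrable (F k) (volume.restrict (Ioi 0)) :=
    fun k => (int_pow_gauss k).const_mul _
  have hnormval : ∀ k, (∫ r in Ioi (0:ℝ), ‖F k r‖)
      = Real.sqrt π * (x^k / Real.Gamma (1 + (k:ℝ)/2)) := by
    intro k
    have e1 : ∀ r ∈ Ioi (0:ℝ), ‖F k r‖ = (x^k / k.factorial) * (r^k * Real.exp (-(r^2/4))) := by
      intro r hr
      rw [hF]
      simp only [Real.norm_eq_abs, abs_mul, abs_div, abs_pow, abs_neg, abs_of_nonneg hx,
        abs_of_nonneg (le_of_lt (mem_Ioi.mp hr)), abs_of_nonneg (Real.exp_pos _).le,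
        Nat.abs_cast]
    rw [setIntegral_congr_fun measurableSet_Ioi e1, integral_const_mul, gauss_moment]
    rw [coef_eq]
    have := (gamma_half_pos k).ne'
    have hk : (0:ℝ) < k.factorial := by exact_mod_cast k.factorial_pos
    field_simp
  have hsum : Summable (fun k => ∫ r in Ioi (0:ℝ), ‖F k r‖) := by
    simp only [hnormval]
    exact (summable_ml hx).mul_left _
  have key := integral_tsum_of_summable_integral_norm hFint hsum
  have hL : ∀ k, (∫ r in Ioi (0:ℝ), F k r)
      = Real.sqrt π * ((-x)^k / Real.Gamma (1 + (k:ℝ)/2)) := by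
    intro k
    rw [hF, integral_const_mul, gauss_moment, coef_eq]
    have := (gamma_half_pos k).ne'
    have hk : (0:ℝ) < k.factorial := by exact_mod_cast k.factorial_pos
    field_simp
  have hR : ∀ r : ℝ, (∑' k, F k r) = Real.exp (-(x*r) - r^2/4) := by
    intro r
    have e2 : ∀ k, F k r = ((-(x*r))^k / k.factorial) * Real.exp (-(r^2/4)) := by
      intro k
      rw [hF]
      have : (-(x*r))^k = (-x)^k * r^k := by rw [show -(x*r) = (-x)*r by ring, mul_pow]
      rw [this]; ring
    simp only [e2]
    rw [tsum_mul_right, ← exp_tsum, ← Real.exp_add]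
    ring_nf
  simp only [hL, hR] at key
  rw [tsum_mul_left, ← ml_half_eq] at key
  rw [← key]
  field_simp

lemma int_exp_xr (x : ℝ) (hx : 0 ≤ x) :
    IntegrableOn (fun r : ℝ => Real.exp (-(x*r) - r^2/4)) (Ioi 0) := by
  have h0 : IntegrableOn (fun r : ℝ => r ^ 0 * Real.exp (-(r^2/4))) (Ioi 0) :=
    int_pow_gauss 0
  simp only [pow_zero, one_mul] at h0
  refine h0.mono' ?_ ?_
  · exact (Continuous.aestronglyMeasurable (by continuity)).restrict
  · refine (ae_restrict_iff' measurableSet_Ioi).2 (ae_of_all _ (fun r hr => ?_))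
    rw [Real.norm_eq_abs, abs_of_nonneg (Real.exp_pos _).le]
    apply Real.exp_le_exp.mpr
    have : 0 ≤ x * r := mul_nonneg hx (le_of_lt (mem_Ioi.mp hr))
    linarith

lemma ml_antitone {a b : ℝ} (ha : 0 ≤ a) (hab : a ≤ b) :
    mittagLeffler (1/2) (-b) ≤ mittagLeffler (1/2) (-a) := by
  have hb : 0 ≤ b := ha.trans hab
  rw [ml_rep ha, ml_rep hb]
  have hπ : (0:ℝ) < Real.sqrt π := Real.sqrt_pos.mpr Real.pi_pos
  apply mul_le_mul_of_nonneg_left _ (by positivity)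
  apply setIntegral_mono_on (int_exp_xr b hb) (int_exp_xr a ha) measurableSet_Ioi
  intro r hr
  apply Real.exp_le_exp.mpr
  have hr' := le_of_lt (mem_Ioi.mp hr)
  nlinarith

lemma ml_zero : mittagLeffler (1/2) (-0) = 1 := by
  rw [neg_zero, ml_half_eq]
  rw [tsum_eq_single 0 (fun k hk => by
    rw [zero_pow hk, zero_div])]
  norm_num [Real.Gamma_one]

lemma ml_nonneg {x : ℝ} (hx : 0 ≤ x) : 0 ≤ mittagLeffler (1/2) (-x) := by
  rw [ml_rep hx]
  have hπ : (0:ℝ) < Real.sqrt π := Real.sqrt_pos.mpr Real.pi_pos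
  apply mul_nonneg (by positivity)
  apply setIntegral_nonneg measurableSet_Ioi
  exact fun r _ => (Real.exp_pos _).le

lemma ml_le_one {x : ℝ} (hx : 0 ≤ x) : mittagLeffler (1/2) (-x) ≤ 1 := by
  have := ml_antitone le_rfl hx
  rwa [ml_zero] at this

lemma rpow_half_nonneg (s : ℝ) : 0 ≤ s ^ ((1:ℝ)/2) := by
  rcases le_or_gt 0 s with h | h
  · exact Real.rpow_nonneg h _
  · rw [Real.rpow_def_of_neg h]
    rw [show (1:ℝ)/2*π = π/2 by ring, Real.cos_pi_div_two, mul_zero]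

lemma rpow_half_mono : Monotone (fun s : ℝ => s ^ ((1:ℝ)/2)) := by
  intro a b hab
  simp only []
  rcases le_or_gt 0 a with h | h
  · exact Real.rpow_le_rpow h hab (by norm_num)
  · have : a ^ ((1:ℝ)/2) = 0 := by
      rw [Real.rpow_def_of_neg h, show (1:ℝ)/2*π = π/2 by ring, Real.cos_pi_div_two, mul_zero]
    rw [this]
    exact rpow_half_nonneg b

lemma h_antitone (ν : ℝ) (hν : 0 < ν) :
    Antitone (fun s : ℝ => mittagLeffler (1/2) (-ν * s ^ ((1:ℝ)/2))) := by
  intro a b hab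
  simp only [neg_mul]
  exact ml_antitone (mul_nonneg hν.le (rpow_half_nonneg a))
    (mul_le_mul_of_nonneg_left (rpow_half_mono hab) hν.le)

lemma inner_eq {x : ℝ} (hx : 0 ≤ x) :
    ∫ t in Ioi (0:ℝ), Real.exp (-(x * t ^ (-(1/2):ℝ))) * stableHalf t
      = mittagLeffler (1/2) (-x) := by
  have hπ : (0:ℝ) < Real.sqrt π := Real.sqrt_pos.mpr Real.pi_pos
  set g : ℝ → ℝ := fun t => Real.exp (-(x * t ^ (-(1/2):ℝ))) * stableHalf t with hg
  have hsub := integral_comp_rpow_Ioi g (p := (-2:ℝ)) (by norm_num)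
  rw [← hsub]
  have e : ∀ r ∈ Ioi (0:ℝ),
      (|(-2:ℝ)| * r ^ ((-2:ℝ)-1)) • g (r ^ (-2:ℝ))
        = (Real.sqrt π)⁻¹ * Real.exp (-(x*r) - r^2/4) := by
    intro r hr
    have hr0 : (0:ℝ) < r := mem_Ioi.mp hr
    have hr3 : r ^ ((-2:ℝ)-1) = (r^3)⁻¹ := by
      rw [show (-2:ℝ)-1 = -((3:ℕ):ℝ) by norm_num, Real.rpow_neg hr0.le, Real.rpow_natCast]
    have h1 : (r ^ (-2:ℝ)) ^ (-(1/2):ℝ) = r := by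
      rw [← Real.rpow_mul hr0.le]
      norm_num
    have h2 : (r ^ (-2:ℝ)) ^ (-(3/2):ℝ) = r ^ 3 := by
      rw [← Real.rpow_mul hr0.le]
      norm_num
    have h3 : r ^ (-2:ℝ) = (r^2)⁻¹ := by
      rw [show (-2:ℝ) = -((2:ℕ):ℝ) by norm_num, Real.rpow_neg hr0.le, Real.rpow_natCast]
    rw [hg]
    simp only [smul_eq_mul]
    rw [h1]
    unfold stableHalf
    rw [h2, h3]
    have h4 : (-1) / (4 * (r^2)⁻¹) = -(r^2/4) := by
      field_simp
    rw [h4, hr3, abs_neg, abs_two,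
      show -(x*r) - r^2/4 = -(x*r) + -(r^2/4) by ring, Real.exp_add]
    field_simp
  rw [setIntegral_congr_fun measurableSet_Ioi e, integral_const_mul, ← ml_rep hx]

lemma int_pow_exp (n : ℕ) {c : ℝ} (hc : 0 < c) :
    IntegrableOn (fun s : ℝ => s ^ n * Real.exp (-(c*s))) (Ioi 0) := by
  have h := integrableOn_rpow_mul_exp_neg_mul_rpow (p := 1) (s := (n:ℝ))
    (lt_of_lt_of_le neg_one_lt_zero (Nat.cast_nonneg n)) one_pos hc
  refine h.congr_fun (fun s hs => ?_) measurableSet_Ioi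
  beta_reduce
  rw [Real.rpow_natCast, Real.rpow_one, neg_mul]

/-- Let m ≥ 1 be an integer, ν > 0 and u > 0.  Then
∫₀^∞ s^{m−1} e^{−us} E_{1/2}(−ν s^{1/2}) ds
  = u^{−m} ∫₀^∞ ∫₀^∞ s^{m−1} e^{−s − ν (s/u)^{1/2} t^{−1/2}} f_{1/2}(t) dt ds,
both sides being finite. -/
theorem stmt13 (m : ℕ) (hm : 1 ≤ m) (ν u : ℝ) (hν : 0 < ν) (hu : 0 < u) :
    IntegrableOn (fun s : ℝ =>
        s ^ (m - 1) * Real.exp (-u * s) * mittagLeffler (1 / 2) (-ν * s ^ ((1:ℝ) / 2)))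
      (Ioi 0) ∧
    IntegrableOn (fun s : ℝ => ∫ t in Ioi (0:ℝ),
        s ^ (m - 1) *
          Real.exp (-s - ν * (s / u) ^ ((1:ℝ) / 2) * t ^ (-(1 / 2) : ℝ)) * stableHalf t)
      (Ioi 0) ∧
    ∫ s in Ioi (0:ℝ),
        s ^ (m - 1) * Real.exp (-u * s) * mittagLeffler (1 / 2) (-ν * s ^ ((1:ℝ) / 2))
      = u ^ (-(m : ℝ)) * ∫ s in Ioi (0:ℝ), ∫ t in Ioi (0:ℝ),
          s ^ (m - 1) *
            Real.exp (-s - ν * (s / u) ^ ((1:ℝ) / 2) * t ^ (-(1 / 2) : ℝ)) *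
              stableHalf t := by
  set n := m - 1 with hn
  set h : ℝ → ℝ := fun s => mittagLeffler (1/2) (-ν * s ^ ((1:ℝ)/2)) with hh
  have hmh : Measurable h := (h_antitone ν hν).measurable
  have hbound : ∀ s : ℝ, 0 < s → 0 ≤ h s ∧ h s ≤ 1 := by
    intro s hs
    have hx : 0 ≤ ν * s ^ ((1:ℝ)/2) := mul_nonneg hν.le (rpow_half_nonneg s)
    rw [hh]
    simp only [neg_mul]
    exact ⟨ml_nonneg hx, ml_le_one hx⟩
  set f1 : ℝ → ℝ := fun s => s ^ n * Real.exp (-u * s) * h s with hf1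
  -- integrability of f1
  have hf1m : Measurable f1 := by
    apply Measurable.mul
    · exact (measurable_id.pow_const n).mul
        (Real.measurable_exp.comp (measurable_id.const_mul (-u)))
    · exact hmh
  have hf1int : IntegrableOn f1 (Ioi 0) := by
    refine (int_pow_exp n hu).mono' hf1m.aestronglyMeasurable.restrict ?_
    refine (ae_restrict_iff' measurableSet_Ioi).2 (ae_of_all _ (fun s hs => ?_))
    have hs0 : (0:ℝ) < s := mem_Ioi.mp hs
    obtain ⟨hb0, hb1⟩ := hbound s hs0
    rw [hf1]
    simp only [Real.norm_eq_abs, abs_mul]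
    rw [abs_of_nonneg (by positivity : (0:ℝ) ≤ s ^ n), abs_of_nonneg (Real.exp_pos _).le,
      abs_of_nonneg hb0, neg_mul]
    calc s ^ n * Real.exp (-(u*s)) * h s ≤ s ^ n * Real.exp (-(u*s)) * 1 := by
          apply mul_le_mul_of_nonneg_left hb1 (by positivity)
      _ = s ^ n * Real.exp (-(u*s)) := by ring
  -- the G function
  set G : ℝ → ℝ := fun s => s ^ n * Real.exp (-s) * h (s/u) with hG
  have hGm : Measurable G := by
    apply Measurable.mul
    · exact (measurable_id.pow_const n).mul (Real.measurable_exp.comp measurable_neg)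
    · exact hmh.comp (measurable_id.div_const u)
  have hGint : IntegrableOn G (Ioi 0) := by
    have h1 : IntegrableOn (fun s : ℝ => s ^ n * Real.exp (-((1:ℝ)*s))) (Ioi 0) :=
      int_pow_exp n one_pos
    simp only [one_mul] at h1
    refine h1.mono' hGm.aestronglyMeasurable.restrict ?_
    refine (ae_restrict_iff' measurableSet_Ioi).2 (ae_of_all _ (fun s hs => ?_))
    have hs0 : (0:ℝ) < s := mem_Ioi.mp hs
    obtain ⟨hb0, hb1⟩ := hbound (s/u) (div_pos hs0 hu)
    rw [hG]
    simp only [Real.norm_eq_abs, abs_mul]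
    rw [abs_of_nonneg (by positivity : (0:ℝ) ≤ s ^ n), abs_of_nonneg (Real.exp_pos _).le,
      abs_of_nonneg hb0]
    calc s ^ n * Real.exp (-s) * h (s/u) ≤ s ^ n * Real.exp (-s) * 1 := by
          apply mul_le_mul_of_nonneg_left hb1 (by positivity)
      _ = s ^ n * Real.exp (-s) := by ring
  -- inner integral computation
  have hML_inner : ∀ s ∈ Ioi (0:ℝ),
      (∫ t in Ioi (0:ℝ), s ^ n *
          Real.exp (-s - ν * (s / u) ^ ((1:ℝ) / 2) * t ^ (-(1 / 2) : ℝ)) * stableHalf t)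
        = G s := by
    intro s hs
    have hs0 : (0:ℝ) < s := mem_Ioi.mp hs
    have hx : 0 ≤ ν * (s/u) ^ ((1:ℝ)/2) := mul_nonneg hν.le (rpow_half_nonneg _)
    have step1 : (∫ t in Ioi (0:ℝ), s ^ n *
          Real.exp (-s - ν * (s / u) ^ ((1:ℝ) / 2) * t ^ (-(1 / 2) : ℝ)) * stableHalf t)
        = ∫ t in Ioi (0:ℝ), (s ^ n * Real.exp (-s)) *
            (Real.exp (-((ν * (s/u) ^ ((1:ℝ)/2)) * t ^ (-(1/2):ℝ))) * stableHalf t) := by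
      refine setIntegral_congr_fun measurableSet_Ioi (fun t ht => ?_)
      rw [show -s - ν * (s / u) ^ ((1:ℝ) / 2) * t ^ (-(1 / 2) : ℝ)
          = -s + -((ν * (s/u) ^ ((1:ℝ)/2)) * t ^ (-(1/2):ℝ)) by ring, Real.exp_add]
      ring
    rw [step1, integral_const_mul, inner_eq hx, hG]
    rw [show -(ν * (s/u) ^ ((1:ℝ)/2)) = -ν * (s/u) ^ ((1:ℝ)/2) by ring]
  refine ⟨hf1int, ?_, ?_⟩
  · exact hGint.congr_fun (fun s hs => (hML_inner s hs).symm) measurableSet_Ioi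
  · rw [setIntegral_congr_fun measurableSet_Ioi hML_inner]
    have hsub := integral_comp_mul_left_Ioi G 0 hu
    rw [mul_zero, smul_eq_mul] at hsub
    have hGu : ∀ x : ℝ, G (u*x) = u ^ n * f1 x := by
      intro x
      rw [hG, hf1]
      simp only []
      rw [mul_div_cancel_left₀ x hu.ne', mul_pow, neg_mul]
      ring
    have hint2 : (∫ x in Ioi (0:ℝ), G (u*x)) = u ^ n * ∫ x in Ioi (0:ℝ), f1 x := by
      rw [show (fun x => G (u*x)) = fun x => u ^ n * f1 x from funext hGu]
      exact integral_const_mul _ _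
    rw [hint2] at hsub
    have hGval : (∫ s in Ioi (0:ℝ), G s) = u ^ m * ∫ x in Ioi (0:ℝ), f1 x := by
      have := hsub.symm
      field_simp at this
      rw [this, show m = n+1 from by omega, pow_succ]
      ring
    rw [hGval, show (u:ℝ) ^ (-(m:ℝ)) = ((u^m : ℝ))⁻¹ from by
        rw [Real.rpow_neg hu.le, Real.rpow_natCast],
      ← mul_assoc, inv_mul_cancel₀ (pow_ne_zero m hu.ne'), one_mul]
end
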